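/- Let G be a finite directed graph and v a vertex with r(v) ≥ 2 reachable vertices. Writing a = d+2 and b = γ̃_{d+1}(v) + a·(n_d(v) − 1) − f_d(v) for some d ≥ 0 with n_d(v) ≥ 1, we have b > 0 and f(v) ≥ a·(r(v) − 1) − b. -/

import Mathlib

open Finset

variable {V : Type*}

/-- `steps r n v w` : there is a walk of length `n` from `v` to `w` along relation `r`. -/
def steps (r : V → V → Prop) : ℕ → V → V → Prop
  | 0, v, w => v = w
  | n+1, v, w => ∃ u, r v u ∧ steps r n u w

/-- `w` is reachable from `v`. -/
def reach (r : V → V → Prop) (v w : V) : Prop := ∃ n, steps r n v w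

/-- shortest-path distance (number of edges). -/
noncomputable def ddist (r : V → V → Prop) (v w : V) : ℕ := sInf {n | steps r n v w}

open scoped Classical in
/-- set of vertices reachable from `v`. -/
noncomputable def Rset (r : V → V → Prop) [Fintype V] (v : V) : Finset V :=
  univ.filter (fun w => reach r v w)

/-- number of vertices reachable from `v`. -/
noncomputable def rnum (r : V → V → Prop) [Fintype V] (v : V) : ℕ := (Rset r v).card

/-- farness of `v`. -/
noncomputable def farn (r : V → V → Prop) [Fintype V] (v : V) : ℕ :=
  ∑ w ∈ Rset r v, ddist r v w

open scoped Classical in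
/-- ball of radius `d` around `v`. -/
noncomputable def ball (r : V → V → Prop) [Fintype V] (v : V) (d : ℕ) : Finset V :=
  univ.filter (fun w => reach r v w ∧ ddist r v w ≤ d)

/-- number of vertices at distance at most `d` from `v`. -/
noncomputable def nball (r : V → V → Prop) [Fintype V] (v : V) (d : ℕ) : ℕ := (ball r v d).card

open scoped Classical in
/-- set of vertices at distance exactly `d` from `v`. -/
noncomputable def sphere (r : V → V → Prop) [Fintype V] (v : V) (d : ℕ) : Finset V :=
  univ.filter (fun w => reach r v w ∧ ddist r v w = d)

/-- number of vertices at distance exactly `d` from `v`. -/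
noncomputable def gam (r : V → V → Prop) [Fintype V] (v : V) (d : ℕ) : ℕ := (sphere r v d).card

/-- farness of `v` restricted to distance at most `d`. -/
noncomputable def fd (r : V → V → Prop) [Fintype V] (v : V) (d : ℕ) : ℕ :=
  ∑ w ∈ ball r v d, ddist r v w

open scoped Classical in
/-- out-degree of `u`. -/
noncomputable def outdeg (r : V → V → Prop) [Fintype V] (u : V) : ℕ :=
  (univ.filter (fun w => r u w)).card

/-- `gtil r v d` = upper bound γ̃_{d+1}(v) = Σ_{u : dist(v,u)=d} outdeg(u). -/
noncomputable def gtil (r : V → V → Prop) [Fintype V] (v : V) (d : ℕ) : ℕ :=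
  ∑ u ∈ sphere r v d, outdeg r u

section Aux

open scoped Classical

variable (r : V → V → Prop)

lemma steps_zero {v w : V} : steps r 0 v w ↔ v = w := Iff.rfl

lemma steps_succ {n : ℕ} {v w : V} :
    steps r (n + 1) v w ↔ ∃ u, r v u ∧ steps r n u w := Iff.rfl

lemma steps_trans {m n : ℕ} {v u w : V} (h1 : steps r m v u) (h2 : steps r n u w) :
    steps r (m + n) v w := by
  induction m generalizing v with
  | zero => cases h1; simpa using h2
  | succ m ih =>
    rw [steps_succ] at h1
    obtain ⟨x, hx, hs⟩ := h1
    have he : m + 1 + n = (m + n) + 1 := by omega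
    rw [he, steps_succ]
    exact ⟨x, hx, ih hs⟩

lemma steps_split {k : ℕ} {v w : V} (h : steps r k v w) :
    ∀ j ≤ k, ∃ u, steps r j v u ∧ steps r (k - j) u w := by
  induction k generalizing v with
  | zero =>
    intro j hj
    interval_cases j
    exact ⟨v, rfl, h⟩
  | succ k ih =>
    intro j hj
    rw [steps_succ] at h
    obtain ⟨x, hx, hs⟩ := h
    cases j with
    | zero => exact ⟨v, rfl, ⟨x, hx, hs⟩⟩
    | succ j =>
      obtain ⟨u, hu1, hu2⟩ := ih hs j (by omega)
      exact ⟨u, ⟨x, hx, hu1⟩, by simpa [Nat.succ_sub_succ] using hu2⟩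

lemma reach_self (v : V) : reach r v v := ⟨0, rfl⟩

lemma ddist_le {n : ℕ} {v w : V} (h : steps r n v w) : ddist r v w ≤ n :=
  Nat.sInf_le h

lemma steps_ddist {v w : V} (h : reach r v w) : steps r (ddist r v w) v w :=
  Nat.sInf_mem h

lemma ddist_self (v : V) : ddist r v v = 0 :=
  Nat.le_zero.mp (ddist_le r (show steps r 0 v v from rfl))

lemma exists_at_dist {v w : V} (h : reach r v w) {j : ℕ} (hj : j ≤ ddist r v w) :
    ∃ u, reach r v u ∧ ddist r v u = j ∧ steps r (ddist r v w - j) u w := by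
  obtain ⟨u, h1, h2⟩ := steps_split r (steps_ddist r h) j hj
  refine ⟨u, ⟨j, h1⟩, le_antisymm (ddist_le r h1) ?_, h2⟩
  by_contra hlt
  push_neg at hlt
  have hk := ddist_le r (steps_trans r (steps_ddist r ⟨j, h1⟩) h2)
  omega

variable [Fintype V]

lemma mem_Rset {v w : V} : w ∈ Rset r v ↔ reach r v w := by
  classical simp [Rset]

lemma mem_ball {v w : V} {d : ℕ} :
    w ∈ ball r v d ↔ reach r v w ∧ ddist r v w ≤ d := by
  classical simp [ball]

lemma mem_sphere {v w : V} {d : ℕ} :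
    w ∈ sphere r v d ↔ reach r v w ∧ ddist r v w = d := by
  classical simp [sphere]

lemma v_mem_ball (v : V) (d : ℕ) : v ∈ ball r v d := by
  rw [mem_ball]
  exact ⟨reach_self r v, by simp [ddist_self]⟩

lemma ball_subset_Rset (v : V) (d : ℕ) : ball r v d ⊆ Rset r v := fun w hw => by
  rw [mem_Rset]; exact ((mem_ball r).mp hw).1

lemma ball_subset_ball (v : V) (d : ℕ) : ball r v d ⊆ ball r v (d + 1) := fun w hw => by
  rw [mem_ball] at hw ⊢; exact ⟨hw.1, hw.2.trans (by omega)⟩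

lemma ball_sdiff_ball (v : V) (d : ℕ) :
    ball r v (d + 1) \ ball r v d = sphere r v (d + 1) := by
  ext w
  simp only [Finset.mem_sdiff, mem_ball, mem_sphere]
  constructor
  · rintro ⟨⟨h1, h2⟩, h3⟩
    refine ⟨h1, ?_⟩
    by_contra hne
    exact h3 ⟨h1, by omega⟩
  · rintro ⟨h1, h2⟩
    exact ⟨⟨h1, by omega⟩, fun h => by omega⟩

/-- f_d ≤ d * (n_d - 1). -/
lemma fd_le (v : V) (d : ℕ) : fd r v d ≤ d * (nball r v d - 1) := by
  classical
  have h0 : ddist r v v = 0 := ddist_self r v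
  have hsum : ∑ w ∈ (ball r v d).erase v, ddist r v w = fd r v d :=
    Finset.sum_erase _ h0
  have hle : ∑ w ∈ (ball r v d).erase v, ddist r v w
      ≤ ((ball r v d).erase v).card * d := by
    apply Finset.sum_le_card_nsmul
    intro x hx
    exact ((mem_ball r).mp (Finset.mem_of_mem_erase hx)).2
  rw [Finset.card_erase_of_mem (v_mem_ball r v d)] at hle
  calc fd r v d = _ := hsum.symm
    _ ≤ _ := hle
    _ = d * (nball r v d - 1) := by rw [Nat.mul_comm]; rfl

/-- γ_{d+1} ≤ γ̃_{d+1}. -/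
lemma gam_le_gtil (v : V) (d : ℕ) : gam r v (d + 1) ≤ gtil r v d := by
  classical
  have hsub : sphere r v (d + 1) ⊆
      (sphere r v d).biUnion (fun u => univ.filter (fun w => r u w)) := by
    intro w hw
    rw [mem_sphere] at hw
    obtain ⟨h1, h2⟩ := hw
    obtain ⟨u, hu1, hu2, hu3⟩ := exists_at_dist r h1 (show d ≤ ddist r v w by omega)
    rw [h2, Nat.add_sub_cancel_left, show (1:ℕ) = 0 + 1 from rfl, steps_succ] at hu3
    obtain ⟨x, hx, hxw⟩ := hu3
    rw [steps_zero] at hxw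
    cases hxw
    exact Finset.mem_biUnion.mpr ⟨u, (mem_sphere r).mpr ⟨hu1, hu2⟩, by simp [hx]⟩
  calc gam r v (d + 1) ≤ _ := Finset.card_le_card hsub
    _ ≤ ∑ u ∈ sphere r v d, (univ.filter (fun w => r u w)).card :=
      Finset.card_biUnion_le
    _ = gtil r v d := by rfl

lemma farn_split (v : V) (d : ℕ) :
    farn r v = fd r v (d + 1) + ∑ w ∈ Rset r v \ ball r v (d + 1), ddist r v w := by
  classical
  rw [Nat.add_comm]
  exact (Finset.sum_sdiff (ball_subset_Rset r v (d + 1))).symm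

lemma fd_succ (v : V) (d : ℕ) :
    fd r v (d + 1) = fd r v d + (d + 1) * gam r v (d + 1) := by
  classical
  have := Finset.sum_sdiff (f := fun w => ddist r v w) (ball_subset_ball r v d)
  rw [ball_sdiff_ball] at this
  have hconst : ∑ w ∈ sphere r v (d + 1), ddist r v w = (d + 1) * gam r v (d + 1) := by
    rw [Finset.sum_congr rfl (fun w hw => ((mem_sphere r).mp hw).2), Finset.sum_const,
      smul_eq_mul, Nat.mul_comm]
    rfl
  rw [show fd r v (d+1) = ∑ w ∈ ball r v (d+1), ddist r v w from rfl, ← this, hconst,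
    show fd r v d = ∑ w ∈ ball r v d, ddist r v w from rfl]
  ring

lemma nball_succ (v : V) (d : ℕ) :
    nball r v (d + 1) = nball r v d + gam r v (d + 1) := by
  classical
  have := Finset.card_sdiff_of_subset (ball_subset_ball r v d)
  rw [ball_sdiff_ball] at this
  have hle := Finset.card_le_card (ball_subset_ball r v d)
  unfold nball gam
  omega

lemma tail_bound (v : V) (d : ℕ) :
    (d + 2) * (rnum r v - nball r v (d + 1)) ≤
      ∑ w ∈ Rset r v \ ball r v (d + 1), ddist r v w := by
  classical
  have h : ∀ w ∈ Rset r v \ ball r v (d + 1), d + 2 ≤ ddist r v w := by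
    intro w hw
    rw [Finset.mem_sdiff, mem_Rset, mem_ball] at hw
    have : ¬ ddist r v w ≤ d + 1 := fun h => hw.2 ⟨hw.1, h⟩
    omega
  have := Finset.card_nsmul_le_sum _ _ _ h
  rw [Finset.card_sdiff_of_subset (ball_subset_Rset r v (d + 1)), smul_eq_mul, Nat.mul_comm] at this
  exact le_trans (le_of_eq rfl) this

lemma nball_le_rnum (v : V) (d : ℕ) : nball r v d ≤ rnum r v :=
  Finset.card_le_card (ball_subset_Rset r v d)

/-- either the ball has ≥ 2 vertices or gtil ≥ 1. -/
lemma key_dichotomy (v : V) (d : ℕ) (hr : 2 ≤ rnum r v) :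
    2 ≤ nball r v d ∨ 1 ≤ gtil r v d := by
  classical
  have hv : v ∈ Rset r v := (mem_Rset r).mpr (reach_self r v)
  obtain ⟨w, hw, hwv⟩ := Finset.exists_mem_ne (s := Rset r v) hr v
  have hwr : reach r v w := (mem_Rset r).mp hw
  have hk : 1 ≤ ddist r v w := by
    rcases Nat.eq_zero_or_pos (ddist r v w) with h | h
    · exact absurd (steps_ddist r hwr) (by rw [h]; exact fun h => hwv h.symm)
    · exact h
  by_cases hd : ddist r v w ≤ d
  · left
    have : {v, w} ⊆ ball r v d := by
      intro x hx
      rcases Finset.mem_insert.mp hx with h | h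
      · exact h ▸ v_mem_ball r v d
      · rw [Finset.mem_singleton] at h
        exact h ▸ (mem_ball r).mpr ⟨hwr, hd⟩
    have := Finset.card_le_card this
    rwa [Finset.card_insert_of_notMem (by simpa using hwv.symm),
      Finset.card_singleton] at this
  · right
    push_neg at hd
    obtain ⟨u, hu1, hu2, hu3⟩ := exists_at_dist r hwr (le_of_lt hd)
    obtain ⟨m, hm⟩ : ∃ m, ddist r v w - d = m + 1 := ⟨ddist r v w - d - 1, by omega⟩
    rw [hm, steps_succ] at hu3
    obtain ⟨x, hx, _⟩ := hu3
    have hout : 1 ≤ outdeg r u := by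
      rw [show (1:ℕ) = ({x} : Finset V).card from rfl]
      apply Finset.card_le_card
      intro y hy
      rw [Finset.mem_singleton] at hy
      simp [outdeg, hy, hx]
    calc 1 ≤ outdeg r u := hout
      _ ≤ gtil r v d :=
        Finset.single_le_sum (f := fun u => outdeg r u) (fun _ _ => Nat.zero_le _)
          ((mem_sphere r).mpr ⟨hu1, hu2⟩)

end Aux

theorem b_pos_and_farness_bound [Fintype V] (r : V → V → Prop) (v : V) (d : ℕ)
    (hr : 2 ≤ rnum r v) (hn : 1 ≤ nball r v d) :
    0 < (gtil r v d : ℤ) + (d + 2) * ((nball r v d : ℤ) - 1) - (fd r v d : ℤ) ∧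
    (farn r v : ℤ) ≥
      (d + 2) * ((rnum r v : ℤ) - 1)
        - ((gtil r v d : ℤ) + (d + 2) * ((nball r v d : ℤ) - 1) - (fd r v d : ℤ)) := by
  classical
  have hfd : (fd r v d : ℤ) ≤ (d : ℤ) * ((nball r v d : ℤ) - 1) := by
    have h := fd_le r v d
    have h1 : ((nball r v d - 1 : ℕ) : ℤ) = (nball r v d : ℤ) - 1 := by
      have := hn; push_cast [Nat.cast_sub hn]; ring
    calc (fd r v d : ℤ) ≤ ((d * (nball r v d - 1) : ℕ) : ℤ) := by exact_mod_cast h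
      _ = (d : ℤ) * (((nball r v d - 1 : ℕ)) : ℤ) := by push_cast; ring
      _ = (d : ℤ) * ((nball r v d : ℤ) - 1) := by rw [h1]
  have hgam : (gam r v (d + 1) : ℤ) ≤ (gtil r v d : ℤ) := by
    exact_mod_cast gam_le_gtil r v d
  have hnle : (nball r v (d + 1) : ℤ) ≤ (rnum r v : ℤ) := by
    exact_mod_cast nball_le_rnum r v (d + 1)
  have hnsucc : (nball r v (d + 1) : ℤ) = (nball r v d : ℤ) + (gam r v (d + 1) : ℤ) := by
    exact_mod_cast nball_succ r v d
  have hfsucc : (fd r v (d + 1) : ℤ)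
      = (fd r v d : ℤ) + ((d : ℤ) + 1) * (gam r v (d + 1) : ℤ) := by
    have := fd_succ r v d
    push_cast [this]; ring
  have htail : ((d : ℤ) + 2) * ((rnum r v : ℤ) - (nball r v (d + 1) : ℤ))
      ≤ ((∑ w ∈ Rset r v \ ball r v (d + 1), ddist r v w : ℕ) : ℤ) := by
    have h := tail_bound r v d
    calc ((d : ℤ) + 2) * ((rnum r v : ℤ) - (nball r v (d + 1) : ℤ))
        = (((d + 2) * (rnum r v - nball r v (d + 1)) : ℕ) : ℤ) := by
          have hle := nball_le_rnum r v (d + 1)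
          push_cast [Nat.cast_sub hle]; ring
      _ ≤ _ := by exact_mod_cast h
  have hfarn : (farn r v : ℤ) = (fd r v (d + 1) : ℤ)
      + ((∑ w ∈ Rset r v \ ball r v (d + 1), ddist r v w : ℕ) : ℤ) := by
    exact_mod_cast farn_split r v d
  constructor
  · rcases key_dichotomy r v d hr with h | h
    · have h2 : (2 : ℤ) ≤ (nball r v d : ℤ) := by exact_mod_cast h
      have hg0 : (0 : ℤ) ≤ (gtil r v d : ℤ) := Int.natCast_nonneg _
      nlinarith
    · have h1 : (1 : ℤ) ≤ (gtil r v d : ℤ) := by exact_mod_cast h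
      have hn1 : (1 : ℤ) ≤ (nball r v d : ℤ) := by exact_mod_cast hn
      nlinarith
  · have hg0 : (0 : ℤ) ≤ (gam r v (d + 1) : ℤ) := Int.natCast_nonneg _
    nlinarith
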